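/- The function x ↦ ln(Φ(x)) is strictly concave on the whole real line, i.e., for all x₁ ≠ x₂ and all λ with 0 < λ < 1, λ·ln(Φ(x₁)) + (1-λ)·ln(Φ(x₂)) < ln(Φ(λx₁ + (1-λ)x₂)). -/

import Mathlib

open MeasureTheory Real Filter Topology

/-- The standard normal cumulative distribution function
`Φ(x) = (√(2π))⁻¹ ∫_{-∞}^x exp(-t²/2) dt`. -/
noncomputable def stdNormalCDF (x : ℝ) : ℝ :=
  (Real.sqrt (2 * Real.pi))⁻¹ * ∫ t in Set.Iic x, Real.exp (-t ^ 2 / 2)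

/-- The standard normal density `φ(x) = (√(2π))⁻¹ exp(-x²/2)`. -/
noncomputable def stdNormalPDF (x : ℝ) : ℝ :=
  (Real.sqrt (2 * Real.pi))⁻¹ * Real.exp (-x ^ 2 / 2)

lemma integrable_gauss : Integrable (fun t : ℝ => Real.exp (-t ^ 2 / 2)) := by
  have h := integrable_exp_neg_mul_sq (by norm_num : (0:ℝ) < 1/2)
  convert h using 2 with t
  ring_nf

lemma integrable_mul_gauss : Integrable (fun t : ℝ => t * Real.exp (-t ^ 2 / 2)) := by
  have h := integrable_mul_exp_neg_mul_sq (by norm_num : (0:ℝ) < 1/2)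
  convert h using 2 with t
  ring_nf

lemma stdNormalPDF_pos (x : ℝ) : 0 < stdNormalPDF x := by
  unfold stdNormalPDF
  have h2π : (0:ℝ) < 2 * Real.pi := by positivity
  positivity

lemma integral_Iic_gauss_pos (x : ℝ) :
    0 < ∫ t in Set.Iic x, Real.exp (-t ^ 2 / 2) := by
  have hsplit : (∫ t in Set.Iic x, Real.exp (-t ^ 2 / 2)) -
      (∫ t in Set.Iic (x - 1), Real.exp (-t ^ 2 / 2)) =
      ∫ t in (x-1)..x, Real.exp (-t ^ 2 / 2) :=
    intervalIntegral.integral_Iic_sub_Iic integrable_gauss.integrableOn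
      integrable_gauss.integrableOn
  have hpos : 0 < ∫ t in (x-1)..x, Real.exp (-t ^ 2 / 2) :=
    intervalIntegral.intervalIntegral_pos_of_pos_on
      integrable_gauss.intervalIntegrable
      (fun t _ => Real.exp_pos _) (by linarith)
  have hnn : 0 ≤ ∫ t in Set.Iic (x - 1), Real.exp (-t ^ 2 / 2) :=
    setIntegral_nonneg measurableSet_Iic fun t _ => (Real.exp_pos _).le
  linarith

lemma stdNormalCDF_pos (x : ℝ) : 0 < stdNormalCDF x := by
  unfold stdNormalCDF
  have h2π : (0:ℝ) < 2 * Real.pi := by positivity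
  exact mul_pos (inv_pos.2 (Real.sqrt_pos.2 h2π)) (integral_Iic_gauss_pos x)

lemma hasDerivAt_gauss (x : ℝ) :
    HasDerivAt (fun t : ℝ => Real.exp (-t ^ 2 / 2)) (-x * Real.exp (-x ^ 2 / 2)) x := by
  have h1 : HasDerivAt (fun t : ℝ => -t ^ 2 / 2) (-x) x := by
    have := ((hasDerivAt_pow 2 x).neg).div_const 2
    refine this.congr_deriv ?_
    simp
    ring
  have := h1.exp
  convert this using 1
  ring

lemma hasDerivAt_stdNormalCDF (x : ℝ) :
    HasDerivAt stdNormalCDF (stdNormalPDF x) x := by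
  have hkey : ∀ y : ℝ, stdNormalCDF y = (Real.sqrt (2 * Real.pi))⁻¹ *
      ((∫ t in Set.Iic (0:ℝ), Real.exp (-t ^ 2 / 2)) +
        ∫ t in (0:ℝ)..y, Real.exp (-t ^ 2 / 2)) := by
    intro y
    unfold stdNormalCDF
    congr 1
    have := intervalIntegral.integral_Iic_sub_Iic
      (integrable_gauss.integrableOn (s := Set.Iic (0:ℝ)))
      (integrable_gauss.integrableOn (s := Set.Iic y))
    linarith
  have hcont : Continuous (fun t : ℝ => Real.exp (-t ^ 2 / 2)) := by
    continuity
  have hd : HasDerivAt (fun y : ℝ => ∫ t in (0:ℝ)..y, Real.exp (-t ^ 2 / 2))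
      (Real.exp (-x ^ 2 / 2)) x :=
    intervalIntegral.integral_hasDerivAt_right
      integrable_gauss.intervalIntegrable
      (hcont.stronglyMeasurableAtFilter _ _)
      hcont.continuousAt
  have := ((hd.const_add (∫ t in Set.Iic (0:ℝ), Real.exp (-t ^ 2 / 2))).const_mul
    (Real.sqrt (2 * Real.pi))⁻¹)
  rw [show stdNormalCDF = fun y => (Real.sqrt (2 * Real.pi))⁻¹ *
      ((∫ t in Set.Iic (0:ℝ), Real.exp (-t ^ 2 / 2)) +
        ∫ t in (0:ℝ)..y, Real.exp (-t ^ 2 / 2)) from funext hkey]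
  exact this

lemma hasDerivAt_stdNormalPDF (x : ℝ) :
    HasDerivAt stdNormalPDF (-x * stdNormalPDF x) x := by
  have := (hasDerivAt_gauss x).const_mul (Real.sqrt (2 * Real.pi))⁻¹
  simp only [stdNormalPDF]
  refine this.congr_deriv ?_
  ring

lemma integral_Iic_neg_mul_gauss (x : ℝ) :
    ∫ t in Set.Iic x, (-t) * Real.exp (-t ^ 2 / 2) = Real.exp (-x ^ 2 / 2) := by
  have hderiv : ∀ t ∈ Set.Iic x, HasDerivAt (fun t : ℝ => Real.exp (-t ^ 2 / 2))
      (-t * Real.exp (-t ^ 2 / 2)) t := fun t _ => hasDerivAt_gauss t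
  have hint : IntegrableOn (fun t : ℝ => -t * Real.exp (-t ^ 2 / 2)) (Set.Iic x) :=
    (integrable_mul_gauss.neg.congr (by
      filter_upwards with t; simp)).integrableOn
  have htend : Tendsto (fun t : ℝ => Real.exp (-t ^ 2 / 2)) atBot (𝓝 0) := by
    apply Real.tendsto_exp_atBot.comp
    apply tendsto_atBot_mono' atBot _ tendsto_id
    filter_upwards [Iic_mem_atBot (-2:ℝ)] with t ht
    have h2 : t ≤ -2 := ht
    show -t ^ 2 / 2 ≤ t
    nlinarith
  have := MeasureTheory.integral_Iic_of_hasDerivAt_of_tendsto' hderiv hint htend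
  simpa using this

lemma key_nonneg (x : ℝ) : 0 ≤ x * stdNormalCDF x + stdNormalPDF x := by
  rcases le_or_gt 0 x with hx | hx
  · have := stdNormalCDF_pos x
    have := stdNormalPDF_pos x
    nlinarith
  · have hle : (-x) * ∫ t in Set.Iic x, Real.exp (-t ^ 2 / 2) ≤ Real.exp (-x ^ 2 / 2) := by
      rw [← integral_Iic_neg_mul_gauss x, ← integral_const_mul]
      refine setIntegral_mono_on
        ((integrable_gauss.const_mul _).integrableOn)
        ((integrable_mul_gauss.neg.congr (by filter_upwards with t; simp)).integrableOn)
        measurableSet_Iic ?_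
      intro t ht
      have : -x ≤ -t := by simpa using ht
      exact mul_le_mul_of_nonneg_right this (Real.exp_pos _).le
    have h2π : (0:ℝ) < (Real.sqrt (2 * Real.pi))⁻¹ := by positivity
    unfold stdNormalCDF stdNormalPDF
    nlinarith [hle]

lemma key_pos (x : ℝ) : 0 < x * stdNormalCDF x + stdNormalPDF x := by
  set g : ℝ → ℝ := fun t => t * stdNormalCDF t + stdNormalPDF t with hg
  have hderiv : ∀ t, HasDerivAt g (stdNormalCDF t) t := by
    intro t
    have h1 := ((hasDerivAt_id t).mul (hasDerivAt_stdNormalCDF t)).add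
      (hasDerivAt_stdNormalPDF t)
    refine h1.congr_deriv ?_
    simp only [id_eq, one_mul]
    ring
  have hmono : StrictMono g :=
    strictMono_of_deriv_pos fun t => by
      rw [(hderiv t).deriv]; exact stdNormalCDF_pos t
  have := hmono (show x - 1 < x by linarith)
  have := key_nonneg (x - 1)
  calc (0:ℝ) ≤ g (x - 1) := key_nonneg (x - 1)
    _ < g x := hmono (by linarith)

lemma strictConcave_log_CDF :
    StrictConcaveOn ℝ Set.univ (fun x => Real.log (stdNormalCDF x)) := by
  set f : ℝ → ℝ := fun x => Real.log (stdNormalCDF x) with hf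
  have hf' : ∀ x, HasDerivAt f (stdNormalPDF x / stdNormalCDF x) x := fun x =>
    (hasDerivAt_stdNormalCDF x).log (stdNormalCDF_pos x).ne'
  have hderiv1 : deriv f = fun x => stdNormalPDF x / stdNormalCDF x :=
    funext fun x => (hf' x).deriv
  refine strictConcaveOn_of_deriv2_neg convex_univ
    (fun x _ => (hf' x).continuousAt.continuousWithinAt) ?_
  intro x _
  have hf'' : HasDerivAt (deriv f)
      (((-x * stdNormalPDF x) * stdNormalCDF x - stdNormalPDF x * stdNormalPDF x) /
        (stdNormalCDF x) ^ 2) x := by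
    rw [hderiv1]
    exact (hasDerivAt_stdNormalPDF x).div (hasDerivAt_stdNormalCDF x)
      (stdNormalCDF_pos x).ne'
  have : deriv^[2] f x = ((-x * stdNormalPDF x) * stdNormalCDF x -
      stdNormalPDF x * stdNormalPDF x) / (stdNormalCDF x) ^ 2 := by
    show deriv (deriv f) x = _
    exact hf''.deriv
  rw [this]
  apply div_neg_of_neg_of_pos
  · have h1 := stdNormalPDF_pos x
    have h2 := key_pos x
    nlinarith
  · exact pow_pos (stdNormalCDF_pos x) 2

/-- `ln ∘ Φ` is strictly concave on ℝ. -/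
theorem log_stdNormalCDF_strictConcave (x₁ x₂ l : ℝ) (hne : x₁ ≠ x₂)
    (hl0 : 0 < l) (hl1 : l < 1) :
    l * Real.log (stdNormalCDF x₁) + (1 - l) * Real.log (stdNormalCDF x₂) <
      Real.log (stdNormalCDF (l * x₁ + (1 - l) * x₂)) := by
  have h := strictConcave_log_CDF.2 (Set.mem_univ x₁) (Set.mem_univ x₂) hne hl0
    (show (0:ℝ) < 1 - l by linarith) (by ring)
  simpa [smul_eq_mul] using h
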